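/- Let 1 < α < 2 and let x ∈ ℝ^N have entries x_i = i + (p - α)/2 for a fixed integer p ≥ 0. Then the N×N matrix H_p with entries (H_p)_{ij} = (i + j + 1 + p)/(i + j - α + p) is positive semidefinite. -/

import Mathlib

open MeasureTheory Set

lemma cauchy_integral (r : ℝ) (hr : -1 < r) :
    ∫ t in Ioo (0:ℝ) 1, t ^ r = 1 / (r + 1) := by
  rw [← integral_Ioc_eq_integral_Ioo, ← intervalIntegral.integral_of_le zero_le_one,
    integral_rpow (Or.inl hr)]
  rw [Real.one_rpow, Real.zero_rpow (by linarith)]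
  ring

lemma cauchy_sum_nonneg (N : ℕ) (x : Fin N → ℝ) (hx : ∀ i, 0 < x i) (c : Fin N → ℝ) :
    0 ≤ ∑ i, ∑ j, c i * c j * (1 / (x i + x j)) := by
  have hint : ∀ r : ℝ, -1 < r → IntegrableOn (fun t : ℝ => t ^ r) (Ioo 0 1) := fun r hr =>
    (intervalIntegral.integrableOn_Ioo_rpow_iff one_pos).mpr hr
  have ha : ∀ i j : Fin N, (-1 : ℝ) < (x i - 1/2) + (x j - 1/2) := by
    intro i j; linarith [hx i, hx j]
  have hsq : ∑ i, ∑ j, c i * c j * (1 / (x i + x j))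
      = ∫ t in Ioo (0:ℝ) 1, (∑ i, c i * t ^ (x i - 1/2)) ^ 2 := by
    rw [eq_comm]
    have heq : EqOn (fun t : ℝ => (∑ i, c i * t ^ (x i - 1/2)) ^ 2)
        (fun t : ℝ => ∑ i, ∑ j, (c i * c j) * t ^ ((x i - 1/2) + (x j - 1/2)))
        (Ioo 0 1) := by
      intro t ht
      simp only
      rw [sq, Finset.sum_mul_sum]
      refine Finset.sum_congr rfl fun i _ => Finset.sum_congr rfl fun j _ => ?_
      rw [Real.rpow_add ht.1]; ring
    rw [setIntegral_congr_fun measurableSet_Ioo heq]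
    rw [integral_finset_sum _ (fun i _ => ?_)]
    · refine Finset.sum_congr rfl fun i _ => ?_
      rw [integral_finset_sum _ (fun j _ => ((hint _ (ha i j)).const_mul _))]
      refine Finset.sum_congr rfl fun j _ => ?_
      rw [MeasureTheory.integral_const_mul, cauchy_integral _ (ha i j)]
      have h1 : (x i - 1/2) + (x j - 1/2) + 1 = x i + x j := by ring
      rw [h1]
    · exact integrable_finset_sum _ (fun j _ => ((hint _ (ha i j)).const_mul _))
  rw [hsq]
  exact integral_nonneg fun t => sq_nonneg _

theorem hadamard_factor_posSemidef (N : ℕ) (α : ℝ) (hα : 1 < α) (hα' : α < 2) (p : ℕ) :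
    (Matrix.of fun i j : Fin N =>
      (((i : ℕ) + 1 : ℝ) + ((j : ℕ) + 1) + 1 + p) /
        (((i : ℕ) + 1 : ℝ) + ((j : ℕ) + 1) - α + p)).PosSemidef := by
  have hx : ∀ i : Fin N, 0 < (i : ℝ) + 1 + ((p : ℝ) - α) / 2 := by
    intro i
    have h1 : (0:ℝ) ≤ (i:ℝ) := Nat.cast_nonneg _
    have h2 : (0:ℝ) ≤ (p:ℝ) := Nat.cast_nonneg _
    nlinarith
  have hentry : ∀ i j : Fin N,
      (((i : ℕ) + 1 : ℝ) + ((j : ℕ) + 1) + 1 + p) /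
        (((i : ℕ) + 1 : ℝ) + ((j : ℕ) + 1) - α + p)
      = 1 + (α + 1) * (1 / (((i : ℝ) + 1 + ((p : ℝ) - α) / 2) + ((j : ℝ) + 1 + ((p : ℝ) - α) / 2))) := by
    intro i j
    have h1 : ((i : ℝ) + 1 + ((p : ℝ) - α) / 2) + ((j : ℝ) + 1 + ((p : ℝ) - α) / 2)
        = ((i:ℕ) + 1 : ℝ) + ((j:ℕ) + 1) - α + p := by push_cast; ring
    have h2 : ((i : ℝ) + 1 + ((p : ℝ) - α) / 2) + ((j : ℝ) + 1 + ((p : ℝ) - α) / 2) ≠ 0 :=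
      (add_pos (hx i) (hx j)).ne'
    rw [← h1, div_eq_iff h2, add_mul, one_mul, mul_one_div, div_mul_cancel₀ _ h2]
    push_cast
    ring
  rw [Matrix.posSemidef_iff_dotProduct_mulVec]
  constructor
  · ext i j
    simp only [Matrix.conjTranspose_apply, Matrix.of_apply, star_trivial]
    ring_nf
  · intro c
    have hS := cauchy_sum_nonneg N (fun i => (i : ℝ) + 1 + ((p : ℝ) - α) / 2) hx c
    have hexp : dotProduct (star c) ((Matrix.of fun i j : Fin N =>
        (((i : ℕ) + 1 : ℝ) + ((j : ℕ) + 1) + 1 + p) /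
          (((i : ℕ) + 1 : ℝ) + ((j : ℕ) + 1) - α + p)).mulVec c)
        = (∑ i, c i) ^ 2 + (α + 1) *
          ∑ i, ∑ j, c i * c j *
            (1 / (((i : ℝ) + 1 + ((p : ℝ) - α) / 2) + ((j : ℝ) + 1 + ((p : ℝ) - α) / 2))) := by
      simp only [dotProduct, Matrix.mulVec, Matrix.of_apply, Pi.star_apply,
        star_trivial]
      simp_rw [hentry, Finset.mul_sum]
      rw [sq, Finset.sum_mul_sum, ← Finset.sum_add_distrib]
      refine Finset.sum_congr rfl fun i _ => ?_
      rw [← Finset.sum_add_distrib]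
      refine Finset.sum_congr rfl fun j _ => ?_
      ring
    rw [hexp]
    nlinarith [hS, sq_nonneg (∑ i, c i)]
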